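/- arXiv:1412.8588 — 2 statements merged into one kernel-verified Lean document; each statement's English description precedes it below -/
import Mathlib

section
/- (Contiguous relation for terminating ₃φ₂ series, type I.) Let 0<q<1, N ∈ ℕ with N ≥ 1, and let A, B, D, E be nonzero complex numbers such that none of (q;q)_t, (D;q)_t, (E;q)_t vanishes for 0 ≤ t ≤ N and A, B, ABq^{-N} ≠ 0. Set C = q^{-N}. Then B(1 − Aq/B)(1 − DE/(ABCq)) · [ (1−C) ₃φ₂(A,B,Cq; D,E; q, DE/(ABCq)) − (A−C) ₃φ₂(A,B,C; D,E; q, DE/(ABC)) ] = B(1−A)(1 − D/B)(1 − E/B) ₃φ₂(Aq, B/q, C; D, E; q, DE/(ABC)) − Aq(1−A)(1 − D/(Aq))(1 − E/(Aq)) ₃φ₂(A, B, C; D, E; q, DE/(ABC)), where ₃φ₂(a,b,c;d,e;q,w) = ∑_{t≥0} (a;q)_t(b;q)_t(c;q)_t w^t /((q;q)_t(d;q)_t(e;q)_t). -/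
/-- Finite q-shifted factorial `(a;q)_n = ∏_{j=0}^{n-1} (1 - a q^j)`. -/
noncomputable def qPoch (q a : ℂ) (n : ℕ) : ℂ :=
  ∏ j ∈ Finset.range n, (1 - a * q ^ j)


lemma qPoch_zero (q a : ℂ) : qPoch q a 0 = 1 := Finset.prod_range_zero _

lemma qPoch_succ (q a : ℂ) (n : ℕ) :
    qPoch q a (n + 1) = qPoch q a n * (1 - a * q ^ n) := Finset.prod_range_succ _ _

lemma qPoch_shift (q a : ℂ) (n : ℕ) :
    qPoch q (a * q) n * (1 - a) = qPoch q a n * (1 - a * q ^ n) := by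
  have h1 : qPoch q a (n + 1) = qPoch q (a * q) n * (1 - a) := by
    unfold qPoch
    rw [Finset.prod_range_succ']
    congr 1
    · exact Finset.prod_congr rfl fun j _ => by rw [pow_succ]; ring
    · rw [pow_zero, mul_one]
  rw [← h1, qPoch_succ]

lemma qPoch_succ' (q a : ℂ) (n : ℕ) :
    qPoch q a (n + 1) = (1 - a) * qPoch q (a * q) n := by
  unfold qPoch
  rw [Finset.prod_range_succ']
  rw [pow_zero, mul_one, mul_comm]
  congr 1
  exact Finset.prod_congr rfl fun j _ => by rw [pow_succ]; ring

lemma qPoch_div_shift (q b : ℂ) (hq : q ≠ 0) (n : ℕ) :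
    qPoch q (b / q) (n + 1) = (1 - b / q) * qPoch q b n := by
  unfold qPoch
  rw [Finset.prod_range_succ']
  rw [pow_zero, mul_one, mul_comm]
  congr 1
  exact Finset.prod_congr rfl fun j _ => by rw [pow_succ]; field_simp

/-- The combined term of the contiguous relation. -/
noncomputable def Tt (q A B C D E : ℂ) (t : ℕ) : ℂ :=
  B * (1 - A * q / B) * (1 - D * E / (A * B * C * q)) *
      ((1 - C) * (qPoch q A t * qPoch q B t * qPoch q (C * q) t *
          (D * E / (A * B * C * q)) ^ t /
          (qPoch q q t * qPoch q D t * qPoch q E t))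
        - (A - C) * (qPoch q A t * qPoch q B t * qPoch q C t *
          (D * E / (A * B * C)) ^ t /
          (qPoch q q t * qPoch q D t * qPoch q E t)))
    - (B * (1 - A) * (1 - D / B) * (1 - E / B) *
        (qPoch q (A * q) t * qPoch q (B / q) t * qPoch q C t *
          (D * E / (A * B * C)) ^ t /
          (qPoch q q t * qPoch q D t * qPoch q E t))
      - A * q * (1 - A) * (1 - D / (A * q)) * (1 - E / (A * q)) *
        (qPoch q A t * qPoch q B t * qPoch q C t *
          (D * E / (A * B * C)) ^ t /
          (qPoch q q t * qPoch q D t * qPoch q E t)))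

/-- The telescoping certificate. -/
noncomputable def gg (q A B C D E : ℂ) : ℕ → ℂ
  | 0 => 0
  | (s + 1) => (A * q - B) * qPoch q A (s + 1) * qPoch q B s * qPoch q C (s + 1) *
      (D * E / (A * B * C)) ^ (s + 1) /
      (q ^ (s + 1) * (qPoch q q s * qPoch q D s * qPoch q E s))

lemma step0 (q A B C D E : ℂ) (hq : q ≠ 0) (hA : A ≠ 0) (hB : B ≠ 0) (hC : C ≠ 0) :
    Tt q A B C D E 0 = gg q A B C D E 1 - gg q A B C D E 0 := by
  simp only [Tt, gg, qPoch_zero, qPoch_succ, zero_add, pow_zero, pow_one, one_mul,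
    mul_one, div_one, sub_zero]
  field_simp
  ring

set_option maxHeartbeats 4000000 in
lemma stepS (q A B C D E : ℂ) (hq : q ≠ 0) (hA : A ≠ 0) (hB : B ≠ 0) (hC : C ≠ 0)
    (s : ℕ)
    (hqs : qPoch q q s ≠ 0) (hds : qPoch q D s ≠ 0) (hes : qPoch q E s ≠ 0)
    (hqs1 : qPoch q q (s + 1) ≠ 0) (hds1 : qPoch q D (s + 1) ≠ 0)
    (hes1 : qPoch q E (s + 1) ≠ 0) :
    Tt q A B C D E (s + 1) = gg q A B C D E (s + 2) - gg q A B C D E (s + 1) := by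
  have hq1' : qPoch q q (s + 1) = qPoch q q s * (1 - q * q ^ s) := qPoch_succ q q s
  have h1qx : (1 : ℂ) - q * q ^ s ≠ 0 := by
    intro h; apply hqs1; rw [hq1', h, mul_zero]
  have h1dx : (1 : ℂ) - D * q ^ s ≠ 0 := by
    intro h; apply hds1; rw [qPoch_succ, h, mul_zero]
  have h1ex : (1 : ℂ) - E * q ^ s ≠ 0 := by
    intro h; apply hes1; rw [qPoch_succ, h, mul_zero]
  rw [Tt, gg, gg]
  rw [qPoch_succ' q A (s + 1), qPoch_succ' q C (s + 1),
    qPoch_succ' q A s, qPoch_succ' q C s,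
    qPoch_succ q (A * q) s, qPoch_succ q (C * q) s,
    qPoch_div_shift q B hq s, qPoch_succ q B s,
    qPoch_succ q D s, qPoch_succ q E s, hq1']
  have hABCq : A * B * C * q ≠ 0 := by simp [hA, hB, hC, hq]
  have hABC : A * B * C ≠ 0 := by simp [hA, hB, hC]
  have hx : q ^ s ≠ 0 := pow_ne_zero _ hq
  have hwq : D * E / (A * B * C * q) = D * E / (A * B * C) / q := by
    rw [div_div]
  rw [hwq]
  simp only [div_pow, pow_succ]
  have hy : (A * B * C) ^ s ≠ 0 := pow_ne_zero _ hABC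
  field_simp
  have hDt : ((A * B * C) ^ s * q ^ s * A ^ 3 * B ^ 3 * C ^ 2 * q ^ 2 * (qPoch q q s * (1 - q * q ^ s) * (qPoch q D s * (1 - D * q ^ s)) * (qPoch q E s * (1 - E * q ^ s)))) ≠ 0 := by
    simp [mul_ne_zero_iff, hqs, hds, hes, hx, hy, h1qx, h1dx, h1ex, hq, hA, hB, hC]
  have h1 : ((1 - C) *
              ((1 - A) * qPoch q (A * q) s * (qPoch q B s * (1 - B * q ^ s)) *
                  (qPoch q (C * q) s * (1 - C * q * q ^ s)) *
                ((D * E) ^ s * (D * E)))) /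
      ((A * B * C) ^ s * q ^ s * (A * B * C * q) *
              (qPoch q q s * (1 - q * q ^ s) * (qPoch q D s * (1 - D * q ^ s)) * (qPoch q E s * (1 - E * q ^ s)))) = ((1 - C) *
              ((1 - A) * qPoch q (A * q) s * (qPoch q B s * (1 - B * q ^ s)) *
                  (qPoch q (C * q) s * (1 - C * q * q ^ s)) *
                ((D * E) ^ s * (D * E)))) * (A ^ 2 * B ^ 2 * C * q) / ((A * B * C) ^ s * q ^ s * A ^ 3 * B ^ 3 * C ^ 2 * q ^ 2 * (qPoch q q s * (1 - q * q ^ s) * (qPoch q D s * (1 - D * q ^ s)) * (qPoch q E s * (1 - E * q ^ s)))) := by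
    rw [div_eq_div_iff (by simp [mul_ne_zero_iff, hqs, hds, hes, hx, hy, h1qx, h1dx, h1ex, hq, hA, hB, hC]) hDt]
    ring
  have h2 : ((A - C) *
              ((1 - A) * qPoch q (A * q) s * (qPoch q B s * (1 - B * q ^ s)) * ((1 - C) * qPoch q (C * q) s) *
                ((D * E) ^ s * (D * E)))) /
      ((A * B * C) ^ s * (A * B * C) *
              (qPoch q q s * (1 - q * q ^ s) * (qPoch q D s * (1 - D * q ^ s)) * (qPoch q E s * (1 - E * q ^ s)))) = ((A - C) *
              ((1 - A) * qPoch q (A * q) s * (qPoch q B s * (1 - B * q ^ s)) * ((1 - C) * qPoch q (C * q) s) *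
                ((D * E) ^ s * (D * E)))) * (q ^ s * A ^ 2 * B ^ 2 * C * q ^ 2) / ((A * B * C) ^ s * q ^ s * A ^ 3 * B ^ 3 * C ^ 2 * q ^ 2 * (qPoch q q s * (1 - q * q ^ s) * (qPoch q D s * (1 - D * q ^ s)) * (qPoch q E s * (1 - E * q ^ s)))) := by
    rw [div_eq_div_iff (by simp [mul_ne_zero_iff, hqs, hds, hes, hx, hy, h1qx, h1dx, h1ex, hq, hA, hB, hC]) hDt]
    ring
  have h3 : (B * (1 - A) * (B - D) * (B - E) *
              (qPoch q (A * q) s * (1 - A * q * q ^ s) * ((q - B) * qPoch q B s) * ((1 - C) * qPoch q (C * q) s) *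
                ((D * E) ^ s * (D * E)))) /
      (B * B *
              (q * ((A * B * C) ^ s * (A * B * C)) *
                (qPoch q q s * (1 - q * q ^ s) * (qPoch q D s * (1 - D * q ^ s)) * (qPoch q E s * (1 - E * q ^ s))))) = (B * (1 - A) * (B - D) * (B - E) *
              (qPoch q (A * q) s * (1 - A * q * q ^ s) * ((q - B) * qPoch q B s) * ((1 - C) * qPoch q (C * q) s) *
                ((D * E) ^ s * (D * E)))) * (q ^ s * A ^ 2 * C * q) / ((A * B * C) ^ s * q ^ s * A ^ 3 * B ^ 3 * C ^ 2 * q ^ 2 * (qPoch q q s * (1 - q * q ^ s) * (qPoch q D s * (1 - D * q ^ s)) * (qPoch q E s * (1 - E * q ^ s)))) := by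
    rw [div_eq_div_iff (by simp [mul_ne_zero_iff, hqs, hds, hes, hx, hy, h1qx, h1dx, h1ex, hq, hA, hB, hC]) hDt]
    ring
  have h4 : (A * q * (1 - A) * (A * q - D) * (A * q - E) *
              ((1 - A) * qPoch q (A * q) s * (qPoch q B s * (1 - B * q ^ s)) * ((1 - C) * qPoch q (C * q) s) *
                ((D * E) ^ s * (D * E)))) /
      (A * q * (A * q) *
              ((A * B * C) ^ s * (A * B * C) *
                (qPoch q q s * (1 - q * q ^ s) * (qPoch q D s * (1 - D * q ^ s)) * (qPoch q E s * (1 - E * q ^ s))))) = (A * q * (1 - A) * (A * q - D) * (A * q - E) *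
              ((1 - A) * qPoch q (A * q) s * (qPoch q B s * (1 - B * q ^ s)) * ((1 - C) * qPoch q (C * q) s) *
                ((D * E) ^ s * (D * E)))) * (q ^ s * B ^ 2 * C) / ((A * B * C) ^ s * q ^ s * A ^ 3 * B ^ 3 * C ^ 2 * q ^ 2 * (qPoch q q s * (1 - q * q ^ s) * (qPoch q D s * (1 - D * q ^ s)) * (qPoch q E s * (1 - E * q ^ s)))) := by
    rw [div_eq_div_iff (by simp [mul_ne_zero_iff, hqs, hds, hes, hx, hy, h1qx, h1dx, h1ex, hq, hA, hB, hC]) hDt]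
    ring
  have h5 : ((A * q - B) * ((1 - A) * (qPoch q (A * q) s * (1 - A * q * q ^ s))) * (qPoch q B s * (1 - B * q ^ s)) *
              ((1 - C) * (qPoch q (C * q) s * (1 - C * q * q ^ s))) *
            ((D * E) ^ s * (D * E) * (D * E))) /
      ((A * B * C) ^ s * (A * B * C) * (A * B * C) *
            (q ^ s * q * q *
              (qPoch q q s * (1 - q * q ^ s) * (qPoch q D s * (1 - D * q ^ s)) * (qPoch q E s * (1 - E * q ^ s))))) = ((A * q - B) * ((1 - A) * (qPoch q (A * q) s * (1 - A * q * q ^ s))) * (qPoch q B s * (1 - B * q ^ s)) *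
              ((1 - C) * (qPoch q (C * q) s * (1 - C * q * q ^ s))) *
            ((D * E) ^ s * (D * E) * (D * E))) * (A * B) / ((A * B * C) ^ s * q ^ s * A ^ 3 * B ^ 3 * C ^ 2 * q ^ 2 * (qPoch q q s * (1 - q * q ^ s) * (qPoch q D s * (1 - D * q ^ s)) * (qPoch q E s * (1 - E * q ^ s)))) := by
    rw [div_eq_div_iff (by simp [mul_ne_zero_iff, hqs, hds, hes, hx, hy, h1qx, h1dx, h1ex, hq, hA, hB, hC]) hDt]
    ring
  have h6 : ((A * q - B) * ((1 - A) * qPoch q (A * q) s) * qPoch q B s * ((1 - C) * qPoch q (C * q) s) *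
            ((D * E) ^ s * (D * E))) /
      ((A * B * C) ^ s * (A * B * C) * (q ^ s * q * (qPoch q q s * qPoch q D s * qPoch q E s))) = ((A * q - B) * ((1 - A) * qPoch q (A * q) s) * qPoch q B s * ((1 - C) * qPoch q (C * q) s) *
            ((D * E) ^ s * (D * E))) * (A ^ 2 * B ^ 2 * C * q * ((1 - q * q ^ s) * (1 - D * q ^ s) * (1 - E * q ^ s))) / ((A * B * C) ^ s * q ^ s * A ^ 3 * B ^ 3 * C ^ 2 * q ^ 2 * (qPoch q q s * (1 - q * q ^ s) * (qPoch q D s * (1 - D * q ^ s)) * (qPoch q E s * (1 - E * q ^ s)))) := by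
    rw [div_eq_div_iff (by simp [mul_ne_zero_iff, hqs, hds, hes, hx, hy, h1qx, h1dx, h1ex, hq, hA, hB, hC]) hDt]
    ring
  ring


/-- Contiguous relation of type I for terminating `₃φ₂` series with `C = q^{-N}`. -/
theorem phi32_contiguous_I (q : ℝ) (hq0 : 0 < q) (hq1 : q < 1) (N : ℕ) (hN : 1 ≤ N)
    (A B D E C : ℂ) (hC : C = (q : ℂ) ^ (-(N : ℤ)))
    (hA : A ≠ 0) (hB : B ≠ 0) (hABC : A * B * C ≠ 0)
    (hden : ∀ t ≤ N, qPoch (q : ℂ) (q : ℂ) t ≠ 0 ∧ qPoch (q : ℂ) D t ≠ 0 ∧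
      qPoch (q : ℂ) E t ≠ 0)
    (phi : ℂ → ℂ → ℂ → ℂ → ℂ → ℂ → ℂ)
    (hphi : ∀ x₁ x₂ x₃ y₁ y₂ z : ℂ, phi x₁ x₂ x₃ y₁ y₂ z =
      ∑ t ∈ Finset.range (N + 1),
        qPoch (q : ℂ) x₁ t * qPoch (q : ℂ) x₂ t * qPoch (q : ℂ) x₃ t * z ^ t /
          (qPoch (q : ℂ) (q : ℂ) t * qPoch (q : ℂ) y₁ t * qPoch (q : ℂ) y₂ t)) :
    B * (1 - A * (q : ℂ) / B) * (1 - D * E / (A * B * C * (q : ℂ))) *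
        ((1 - C) * phi A B (C * (q : ℂ)) D E (D * E / (A * B * C * (q : ℂ)))
          - (A - C) * phi A B C D E (D * E / (A * B * C)))
      = B * (1 - A) * (1 - D / B) * (1 - E / B) *
          phi (A * (q : ℂ)) (B / (q : ℂ)) C D E (D * E / (A * B * C))
        - A * (q : ℂ) * (1 - A) * (1 - D / (A * (q : ℂ))) * (1 - E / (A * (q : ℂ))) *
          phi A B C D E (D * E / (A * B * C)) := by

  have hq : (q : ℂ) ≠ 0 := by
    exact_mod_cast ne_of_gt hq0
  have hC0 : C ≠ 0 := by
    rw [hC]; exact zpow_ne_zero _ hq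
  have hfac : (1 : ℂ) - C * (q : ℂ) ^ N = 0 := by
    rw [hC, ← zpow_natCast (q : ℂ) N, ← zpow_add₀ hq]
    simp
  have hCN1 : qPoch (q : ℂ) C (N + 1) = 0 :=
    Finset.prod_eq_zero (Finset.self_mem_range_succ N) hfac
  have hggN1 : gg (q : ℂ) A B C D E (N + 1) = 0 := by
    simp [gg, hCN1]
  have key : ∀ t ∈ Finset.range (N + 1),
      Tt (q : ℂ) A B C D E t = gg (q : ℂ) A B C D E (t + 1) - gg (q : ℂ) A B C D E t := by
    intro t ht
    have htN : t ≤ N := Nat.lt_succ_iff.mp (Finset.mem_range.mp ht)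
    match t, htN with
    | 0, _ => exact step0 (q : ℂ) A B C D E hq hA hB hC0
    | (s + 1), hsN =>
      obtain ⟨hq1', hd1, he1⟩ := hden (s + 1) hsN
      obtain ⟨hq0', hd0, he0⟩ := hden s (le_trans (Nat.le_succ s) hsN)
      exact stepS (q : ℂ) A B C D E hq hA hB hC0 s hq0' hd0 he0 hq1' hd1 he1
  have hsum : ∑ t ∈ Finset.range (N + 1), Tt (q : ℂ) A B C D E t = 0 := by
    rw [Finset.sum_congr rfl key, Finset.sum_range_sub (gg (q : ℂ) A B C D E), hggN1]
    simp [gg]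
  simp only [hphi]
  rw [← sub_eq_zero, ← hsum]
  simp only [Tt, Finset.sum_sub_distrib, ← Finset.mul_sum]
  try ring
end

section
/- (Contiguous relation for terminating ₃φ₂ series, type II.) Let 0<q<1, N ∈ ℕ, and let B, C, D, E be nonzero complex numbers such that none of (q;q)_t, (D;q)_t, (E;q)_t, (Dq;q)_t, (Eq;q)_t, (Eq²;q)_t vanishes on the relevant ranges, and D ≠ 1, E ≠ 1, Eq ≠ 1. Set A = q^{-N}. Then (1−A)(1−B)(1−C)·(DE/(ABC)) / ((1−D)(1−E)(1−Eq)) · ₃φ₂(Aq, Bq, Cq; Dq, Eq²; q, DE/(ABC)) = ₃φ₂(A, B, C; D, E; q, DE/(ABC)) − ₃φ₂(A, B, C; D, Eq; q, DEq/(ABC)). -/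
lemma qPoch_factor_ne (q a : ℂ) (n : ℕ) (h : qPoch q a (n + 1) ≠ 0) :
    1 - a * q ^ n ≠ 0 := by
  rw [qPoch_succ] at h
  exact right_ne_zero_of_mul h

set_option maxHeartbeats 2000000 in

lemma term_helper (A B C D E Q w ws u pa pb pc pq0 pd pe pe2 : ℂ)
    (hpq : pq0 ≠ 0) (hpd : pd ≠ 0) (hpe : pe ≠ 0) (hpe2 : pe2 ≠ 0)
    (h1D : 1 - D ≠ 0) (h1E : 1 - E ≠ 0) (h1Eq : 1 - E * Q ≠ 0)
    (hf1 : 1 - Q * u ≠ 0) (hf2 : 1 - E * Q * u ≠ 0)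
    (hkey : (1 - E * Q) * pe2 = pe * (1 - E * Q * u)) :
    (1 - A) * (1 - B) * (1 - C) * w / ((1 - D) * (1 - E) * (1 - E * Q)) *
        (pa * pb * pc * ws / (pq0 * pd * pe2)) =
      (1 - A) * pa * ((1 - B) * pb) * ((1 - C) * pc) * (ws * w) /
          (pq0 * (1 - Q * u) * ((1 - D) * pd) * ((1 - E) * pe)) -
        (1 - A) * pa * ((1 - B) * pb) * ((1 - C) * pc) * (ws * w * (u * Q)) /
          (pq0 * (1 - Q * u) * ((1 - D) * pd) * (pe * (1 - E * Q * u))) := by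
  have hD3 : pq0 * (1 - Q * u) * ((1 - D) * pd) * ((1 - E) * pe) ≠ 0 :=
    mul_ne_zero (mul_ne_zero (mul_ne_zero hpq hf1) (mul_ne_zero h1D hpd)) (mul_ne_zero h1E hpe)
  have hD4 : pq0 * (1 - Q * u) * ((1 - D) * pd) * (pe * (1 - E * Q * u)) ≠ 0 :=
    mul_ne_zero (mul_ne_zero (mul_ne_zero hpq hf1) (mul_ne_zero h1D hpd)) (mul_ne_zero hpe hf2)
  have hDL : (1 - D) * (1 - E) * (1 - E * Q) * (pq0 * pd * pe2) ≠ 0 :=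
    mul_ne_zero (mul_ne_zero (mul_ne_zero h1D h1E) h1Eq)
      (mul_ne_zero (mul_ne_zero hpq hpd) hpe2)
  rw [div_mul_div_comm, div_sub_div _ _ hD3 hD4, div_eq_div_iff hDL (mul_ne_zero hD3 hD4)]
  linear_combination (-((1 - A) * (1 - B) * (1 - C) * pa * pb * pc * ws * w * pq0 ^ 2 *
    (1 - Q * u) ^ 2 * (1 - D) ^ 2 * pd ^ 2 * (1 - E) * pe)) * hkey

/-- Contiguous relation of type II for terminating `₃φ₂` series with `A = q^{-N}`. -/
theorem phi32_contiguous_II (q : ℝ) (hq0 : 0 < q) (hq1 : q < 1) (N : ℕ)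
    (B C D E A : ℂ) (hA : A = (q : ℂ) ^ (-(N : ℤ)))
    (hB : B ≠ 0) (hC : C ≠ 0) (hD0 : D ≠ 0) (hE0 : E ≠ 0)
    (hD1 : D ≠ 1) (hE1 : E ≠ 1) (hEq1 : E * (q : ℂ) ≠ 1)
    (hden : ∀ t ≤ N, qPoch (q : ℂ) (q : ℂ) t ≠ 0 ∧ qPoch (q : ℂ) D t ≠ 0 ∧
      qPoch (q : ℂ) E t ≠ 0 ∧ qPoch (q : ℂ) (D * (q : ℂ)) t ≠ 0 ∧
      qPoch (q : ℂ) (E * (q : ℂ)) t ≠ 0 ∧ qPoch (q : ℂ) (E * (q : ℂ) ^ 2) t ≠ 0)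
    (phi : ℂ → ℂ → ℂ → ℂ → ℂ → ℂ → ℂ)
    (hphi : ∀ x₁ x₂ x₃ y₁ y₂ z : ℂ, phi x₁ x₂ x₃ y₁ y₂ z =
      ∑ t ∈ Finset.range (N + 1),
        qPoch (q : ℂ) x₁ t * qPoch (q : ℂ) x₂ t * qPoch (q : ℂ) x₃ t * z ^ t /
          (qPoch (q : ℂ) (q : ℂ) t * qPoch (q : ℂ) y₁ t * qPoch (q : ℂ) y₂ t)) :
    (1 - A) * (1 - B) * (1 - C) * (D * E / (A * B * C)) /
        ((1 - D) * (1 - E) * (1 - E * (q : ℂ))) *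
        phi (A * (q : ℂ)) (B * (q : ℂ)) (C * (q : ℂ)) (D * (q : ℂ)) (E * (q : ℂ) ^ 2)
          (D * E / (A * B * C))
      = phi A B C D E (D * E / (A * B * C))
        - phi A B C D (E * (q : ℂ)) (D * E * (q : ℂ) / (A * B * C)) := by
  have hq : (q : ℂ) ≠ 0 := by
    exact_mod_cast hq0.ne'
  have hA0 : A ≠ 0 := by rw [hA]; exact zpow_ne_zero _ hq
  have h1D : (1 : ℂ) - D ≠ 0 := sub_ne_zero.mpr (Ne.symm hD1)
  have h1E : (1 : ℂ) - E ≠ 0 := sub_ne_zero.mpr (Ne.symm hE1)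
  have h1Eq : (1 : ℂ) - E * (q : ℂ) ≠ 0 := sub_ne_zero.mpr (Ne.symm hEq1)
  rw [hphi, hphi, hphi, Finset.mul_sum, ← Finset.sum_sub_distrib,
    Finset.sum_range_succ, Finset.sum_range_succ']
  have hlast : (1 - A) * (1 - B) * (1 - C) * (D * E / (A * B * C)) /
      ((1 - D) * (1 - E) * (1 - E * (q : ℂ))) *
      (qPoch (q : ℂ) (A * (q : ℂ)) N * qPoch (q : ℂ) (B * (q : ℂ)) N *
        qPoch (q : ℂ) (C * (q : ℂ)) N * (D * E / (A * B * C)) ^ N /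
        (qPoch (q : ℂ) (q : ℂ) N * qPoch (q : ℂ) (D * (q : ℂ)) N *
          qPoch (q : ℂ) (E * (q : ℂ) ^ 2) N)) = 0 := by
    have hAq : A * (q : ℂ) ^ N = 1 := by
      rw [hA, ← zpow_natCast (q : ℂ) N, ← zpow_add₀ hq]
      simp
    have h0 : (1 - A) * qPoch (q : ℂ) (A * (q : ℂ)) N = 0 := by
      rw [← qPoch_succ']
      exact Finset.prod_eq_zero (Finset.self_mem_range_succ N) (by rw [hAq]; ring)
    rcases mul_eq_zero.mp h0 with h | h
    · rw [h]; simp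
    · rw [h]; simp
  have hzero :
      qPoch (q : ℂ) A 0 * qPoch (q : ℂ) B 0 * qPoch (q : ℂ) C 0 *
          (D * E / (A * B * C)) ^ 0 /
          (qPoch (q : ℂ) (q : ℂ) 0 * qPoch (q : ℂ) D 0 * qPoch (q : ℂ) E 0) -
        qPoch (q : ℂ) A 0 * qPoch (q : ℂ) B 0 * qPoch (q : ℂ) C 0 *
          (D * E * (q : ℂ) / (A * B * C)) ^ 0 /
          (qPoch (q : ℂ) (q : ℂ) 0 * qPoch (q : ℂ) D 0 * qPoch (q : ℂ) (E * (q : ℂ)) 0) = 0 := by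
    simp [qPoch]
  rw [hlast, hzero, add_zero, add_zero]
  refine Finset.sum_congr rfl fun s hs => ?_
  rw [Finset.mem_range] at hs
  obtain ⟨hq_s, hD_s, hE_s, hDq_s, hEq_s, hEq2_s⟩ := hden s hs.le
  obtain ⟨hq_s1, hD_s1, hE_s1, hDq_s1, hEq_s1, hEq2_s1⟩ := hden (s + 1) hs
  have hf1 : (1 : ℂ) - (q : ℂ) * (q : ℂ) ^ s ≠ 0 := qPoch_factor_ne _ _ _ hq_s1
  have hf2 : (1 : ℂ) - E * (q : ℂ) * (q : ℂ) ^ s ≠ 0 := qPoch_factor_ne _ _ _ hEq_s1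
  have hkey : (1 - E * (q : ℂ)) * qPoch (q : ℂ) (E * (q : ℂ) ^ 2) s =
      qPoch (q : ℂ) (E * (q : ℂ)) s * (1 - E * (q : ℂ) * (q : ℂ) ^ s) := by
    rw [show E * (q : ℂ) ^ 2 = E * (q : ℂ) * (q : ℂ) by ring, ← qPoch_succ', qPoch_succ]
  have hEq2 : qPoch (q : ℂ) (E * (q : ℂ) ^ 2) s =
      qPoch (q : ℂ) (E * (q : ℂ)) s * (1 - E * (q : ℂ) * (q : ℂ) ^ s) / (1 - E * (q : ℂ)) := by
    rw [eq_div_iff h1Eq]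
    linear_combination hkey
  have hw0 : D * E / (A * B * C) ≠ 0 :=
    div_ne_zero (mul_ne_zero hD0 hE0) (mul_ne_zero (mul_ne_zero hA0 hB) hC)
  rw [qPoch_succ (q : ℂ) (E * (q : ℂ)), qPoch_succ' (q : ℂ) E, qPoch_succ' (q : ℂ) A,
    qPoch_succ' (q : ℂ) B, qPoch_succ' (q : ℂ) C, qPoch_succ' (q : ℂ) D,
    qPoch_succ (q : ℂ) (q : ℂ),
    show D * E * (q : ℂ) / (A * B * C) = D * E / (A * B * C) * (q : ℂ) by ring,
    mul_pow, pow_succ (D * E / (A * B * C)) s, pow_succ (q : ℂ) s]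
  generalize hg7 : qPoch (q : ℂ) (E * (q : ℂ) ^ 2) s = pe2
  rw [hg7] at hEq2_s hkey
  generalize qPoch (q : ℂ) (A * (q : ℂ)) s = pa
  generalize qPoch (q : ℂ) (B * (q : ℂ)) s = pb
  generalize qPoch (q : ℂ) (C * (q : ℂ)) s = pc
  generalize hg4 : qPoch (q : ℂ) (q : ℂ) s = pq0
  rw [hg4] at hq_s
  generalize hg5 : qPoch (q : ℂ) (D * (q : ℂ)) s = pd
  rw [hg5] at hDq_s
  generalize hg6 : qPoch (q : ℂ) (E * (q : ℂ)) s = pe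
  rw [hg6] at hEq_s hkey
  generalize hgw : D * E / (A * B * C) = w
  rw [hgw] at hw0
  generalize hgu : (q : ℂ) ^ s = u
  rw [hgu] at hf1 hf2 hkey
  generalize w ^ s = ws
  exact term_helper A B C D E (q : ℂ) w ws u pa pb pc pq0 pd pe pe2
    hq_s hDq_s hEq_s hEq2_s h1D h1E h1Eq hf1 hf2 hkey
end
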